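/- Let (W, Pl) be a rational qualitative plausibility space and define A <* B iff there exists C with A ∩ C = ∅ and Pl(A) < Pl(C) ≤ Pl(B). If A <* (A ∪ B), then not B <* (A ∪ B). -/
import Mathlib


theorem ltStar_union_asymm {W D : Type*} [PartialOrder D] [BoundedOrder D]
    (Pl : Set W → D)
    (hTop : Pl Set.univ = ⊤) (hBot : Pl (∅ : Set W) = ⊥)
    (A1 : ∀ A B : Set W, A ⊆ B → Pl A ≤ Pl B)
    (A2 : ∀ A B C : Set W, Disjoint A B → Disjoint A C → Disjoint B C →
      Pl C < Pl (A ∪ B) → Pl B < Pl (A ∪ C) → Pl (B ∪ C) < Pl A)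
    (A3 : ∀ A B : Set W, Pl A = ⊥ → Pl B = ⊥ → Pl (A ∪ B) = ⊥)
    (A4 : ∀ A B C : Set W, Disjoint A B → Disjoint A C → Disjoint B C →
      Pl A < Pl B → Pl A < Pl C ∨ Pl C < Pl B)
    (A5 : ∀ A B C : Set W, Disjoint A B → Disjoint A C → Disjoint B C →
      Pl A < Pl (B ∪ C) → Pl A < Pl B ∨ Pl A < Pl C)
    (ltStar : Set W → Set W → Prop)
    (hlt : ∀ A B : Set W, ltStar A B ↔ ∃ C : Set W, A ∩ C = ∅ ∧ Pl A < Pl C ∧ Pl C ≤ Pl B) :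
    ∀ A B : Set W, ltStar A (A ∪ B) → ¬ ltStar B (A ∪ B) := by
  -- Key lemma: a witness for A <* (A ∪ B) gives Pl A < Pl (B \ A).
  have key : ∀ A B C : Set W, A ∩ C = ∅ → Pl A < Pl C → Pl C ≤ Pl (A ∪ B) →
      Pl A < Pl (B \ A) := by
    intro A B C hAC hAltC hCle
    have hACdisj : Disjoint A C := Set.disjoint_iff_inter_eq_empty.mpr hAC
    set E := B \ A with hE
    set C1 := C ∩ (A ∪ B) with hC1
    set C2 := C \ (A ∪ B) with hC2
    have hCsplit : C1 ∪ C2 = C := Set.inter_union_diff C (A ∪ B)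
    have hC1subE : C1 ⊆ E := by
      intro x hx
      rcases hx with ⟨hxC, hxAB⟩
      have hxA : x ∉ A := fun h => hACdisj.ne_of_mem h hxC rfl
      rcases hxAB with h | h
      · exact absurd h hxA
      · exact ⟨h, hxA⟩
    have hAE : Disjoint A E := Set.disjoint_sdiff_right
    have hAC1 : Disjoint A C1 := hACdisj.mono_right Set.inter_subset_left
    have hAC2 : Disjoint A C2 := hACdisj.mono_right Set.diff_subset
    have hC1C2 : Disjoint C1 C2 := (Set.disjoint_sdiff_left.mono_right Set.inter_subset_right).symm
    have hABeq : A ∪ E = A ∪ B := Set.union_diff_self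
    have h5 := A5 A C1 C2 hAC1 hAC2 hC1C2 (by rw [hCsplit]; exact hAltC)
    rcases h5 with h | h
    · exact lt_of_lt_of_le h (A1 _ _ hC1subE)
    · -- Pl A < Pl C2, with C2 disjoint from A ∪ B
      have hGE : Disjoint C2 E := (Set.disjoint_sdiff_left).mono_right
        (Set.diff_subset.trans Set.subset_union_right)
      have hAG : Disjoint A C2 := hAC2
      have hGle : Pl C2 ≤ Pl (A ∪ B) := le_trans (A1 _ _ Set.diff_subset) hCle
      rcases A4 A C2 E hAG hAE hGE h with h' | h'
      · exact h'
      · -- Pl E < Pl C2 : use A2 with (C2, A, E) for a contradiction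
        exfalso
        have h1 : Pl E < Pl (C2 ∪ A) := lt_of_lt_of_le h' (A1 _ _ Set.subset_union_left)
        have h2 : Pl A < Pl (C2 ∪ E) := lt_of_lt_of_le h (A1 _ _ Set.subset_union_left)
        have h3 := A2 C2 A E hAG.symm hGE (Set.disjoint_sdiff_right) h1 h2
        rw [hABeq] at h3
        exact absurd hGle h3.not_ge
  intro A B hA hB
  rw [hlt] at hA hB
  obtain ⟨C, hAC, hAltC, hCle⟩ := hA
  obtain ⟨C', hBC', hBltC', hC'le⟩ := hB
  have h1 : Pl A < Pl (B \ A) := key A B C hAC hAltC hCle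
  have h2 : Pl B < Pl (A \ B) := key B A C' hBC' hBltC' (by rwa [Set.union_comm] at hC'le)
  have : Pl A < Pl A :=
    lt_of_lt_of_le (lt_trans (lt_of_lt_of_le h1 (A1 _ _ Set.diff_subset))
      h2) (A1 _ _ Set.diff_subset)
  exact absurd this (lt_irrefl _)
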